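/- Let ν > 1, η > 0 and β > 0, and set c := ∑_{n ∈ ℤ} (1+n²)^{−ν/2}. For r > 0 let N(r) := Nat.card {j ∈ ℕ | c·exp(−exp(η·j^β)/2) > r}. Then N(r) is finite for each small r > 0 and N(r) = η^{−1/β}·(log(−log r))^{1/β}·(1 + o(1)) as r → 0⁺; equivalently, lim_{r → 0⁺} N(r)/(η^{−1/β}·(log(−log r))^{1/β}) = 1. -/

import Mathlib

open Filter Real Set

private lemma aux_summable {ν : ℝ} (hν : 1 < ν) :
    Summable (fun n : ℤ => (1 + (n : ℝ) ^ 2) ^ (-(ν / 2))) := by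
  have h1 : Summable (fun n : ℤ => |(n : ℝ)| ^ (-ν) + if n = 0 then (1:ℝ) else 0) := by
    refine (Real.summable_abs_int_rpow hν).add (summable_of_finite_support ?_)
    refine Set.Finite.subset (Set.finite_singleton (0 : ℤ)) ?_
    intro n hn
    simp only [Function.mem_support] at hn
    by_contra h
    have h' : n ≠ 0 := fun e => h (by simp [e])
    simp [h'] at hn
  refine h1.of_nonneg_of_le (fun n => Real.rpow_nonneg (by positivity) _) ?_
  intro n
  rcases eq_or_ne n 0 with rfl | hn
  · simp [Real.zero_rpow (by linarith : -ν ≠ 0), Real.one_rpow]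
  · have hn' : (0:ℝ) < (n:ℝ)^2 := by
      have : (n:ℝ) ≠ 0 := Int.cast_ne_zero.mpr hn
      positivity
    have h2 : (1 + (n:ℝ)^2) ^ (-(ν/2)) ≤ ((n:ℝ)^2) ^ (-(ν/2)) :=
      Real.rpow_le_rpow_of_nonpos hn' (by linarith) (by linarith)
    have h3 : ((n:ℝ)^2) ^ (-(ν/2)) = |(n:ℝ)| ^ (-ν) := by
      rw [← sq_abs, ← Real.rpow_natCast |(n:ℝ)| 2, ← Real.rpow_mul (abs_nonneg _)]
      ring_nf
    rw [if_neg hn, add_zero, ← h3]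
    exact h2

private lemma aux_tendsto {a η β : ℝ} (ha : 0 ≤ a) (hη : 0 < η) (hβ : 0 < β) :
    Tendsto (fun s : ℝ =>
      ((⌈((Real.log (2 * (a + s))) / η) ^ (1/β)⌉₊ : ℝ)) /
        (η ^ (-(1/β)) * Real.log s ^ (1/β))) atTop (nhds 1) := by
  set T : ℝ → ℝ := fun s => ((Real.log (2 * (a + s))) / η) ^ (1/β) with hT
  set D : ℝ → ℝ := fun s => η ^ (-(1/β)) * Real.log s ^ (1/β) with hD
  -- Q → 1
  have hg : Tendsto (fun s : ℝ => Real.log (2 + 2*a/s)) atTop (nhds (Real.log 2)) := by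
    have h1 : Tendsto (fun s : ℝ => 2*a/s) atTop (nhds 0) :=
      tendsto_const_nhds.div_atTop tendsto_id
    have h2 : Tendsto (fun s : ℝ => 2 + 2*a/s) atTop (nhds 2) := by
      simpa using tendsto_const_nhds.add h1
    exact ((Real.continuousAt_log (by norm_num)).tendsto.comp h2)
  have hQ : Tendsto (fun s : ℝ => Real.log (2*(a+s)) / Real.log s) atTop (nhds 1) := by
    have h3 : Tendsto (fun s : ℝ => 1 + Real.log (2 + 2*a/s) / Real.log s) atTop (nhds 1) := by
      have := hg.div_atTop Real.tendsto_log_atTop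
      simpa using tendsto_const_nhds.add this
    refine h3.congr' ?_
    filter_upwards [eventually_gt_atTop 1] with s hs
    have hs0 : (0:ℝ) < s := by linarith
    have hfac : 2*(a+s) = s * (2 + 2*a/s) := by field_simp; ring
    have hpos : (0:ℝ) < 2 + 2*a/s := by positivity
    rw [hfac, Real.log_mul hs0.ne' hpos.ne']
    have hls : Real.log s ≠ 0 := (Real.log_pos hs).ne'
    field_simp
  -- T/D → 1
  have hTD : Tendsto (fun s => T s / D s) atTop (nhds 1) := by
    have h4 : Tendsto (fun s : ℝ => (Real.log (2*(a+s)) / Real.log s) ^ (1/β)) atTop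
        (nhds 1) := by
      have := hQ.rpow_const (p := 1/β) (Or.inl one_ne_zero)
      simpa using this
    refine h4.congr' ?_
    filter_upwards [eventually_ge_atTop (Real.exp 1)] with s hs
    have hs1 : (1:ℝ) < s := lt_of_lt_of_le (by nlinarith [Real.add_one_le_exp 1]) hs
    have hs0 : (0:ℝ) < s := by linarith
    have hlogs : 0 < Real.log s := Real.log_pos hs1
    have hnum : 0 ≤ Real.log (2*(a+s)) := by
      apply Real.log_nonneg; nlinarith
    have hne : η ^ (1/β) ≠ 0 := (Real.rpow_pos_of_pos hη _).ne'
    show _ = ((Real.log (2*(a+s))) / η) ^ (1/β) / (η ^ (-(1/β)) * Real.log s ^ (1/β))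
    rw [Real.div_rpow hnum hlogs.le, Real.div_rpow hnum hη.le, Real.rpow_neg hη.le]
    field_simp
  -- D → ∞
  have hDtop : Tendsto D atTop atTop := by
    have h5 : Tendsto (fun s : ℝ => Real.log s ^ (1/β)) atTop atTop :=
      (tendsto_rpow_atTop (by positivity)).comp Real.tendsto_log_atTop
    exact h5.const_mul_atTop (Real.rpow_pos_of_pos hη _)
  -- squeeze
  have hTnonneg : ∀ᶠ s : ℝ in atTop, 0 ≤ T s := by
    filter_upwards [eventually_ge_atTop 1] with s hs
    have hnum : 0 ≤ Real.log (2*(a+s)) := Real.log_nonneg (by nlinarith)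
    exact Real.rpow_nonneg (div_nonneg hnum hη.le) _
  have h1D : Tendsto (fun s => 1 / D s) atTop (nhds 0) := tendsto_const_nhds.div_atTop hDtop
  have hupper : Tendsto (fun s => T s / D s + 1 / D s) atTop (nhds 1) := by
    simpa using hTD.add h1D
  refine tendsto_of_tendsto_of_tendsto_of_le_of_le' hTD hupper ?_ ?_
  · filter_upwards [hTnonneg, hDtop.eventually_gt_atTop 0] with s h0 hDpos
    exact (div_le_div_iff_of_pos_right hDpos).mpr (Nat.le_ceil _)
  · filter_upwards [hTnonneg, hDtop.eventually_gt_atTop 0] with s h0 hDpos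
    rw [← add_div]
    exact (div_le_div_iff_of_pos_right hDpos).mpr (Nat.ceil_lt_add_one h0).le


/-- Eigenvalue counting asymptotics for super-exponentially decaying weights
`c·exp(−exp(η·j^β)/2)`: `N(r) = η^{−1/β}·(log(−log r))^{1/β}·(1+o(1))` as `r → 0⁺`. -/
theorem stmt_13 (ν η β : ℝ) (hν : 1 < ν) (hη : 0 < η) (hβ : 0 < β) :
    (∀ᶠ r : ℝ in nhdsWithin 0 (Set.Ioi 0),
      {j : ℕ | (∑' n : ℤ, (1 + (n : ℝ) ^ 2) ^ (-(ν / 2))) *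
        Real.exp (-Real.exp (η * (j : ℝ) ^ β) / 2) > r}.Finite) ∧
    Tendsto
      (fun r : ℝ =>
        (Nat.card {j : ℕ | (∑' n : ℤ, (1 + (n : ℝ) ^ 2) ^ (-(ν / 2))) *
            Real.exp (-Real.exp (η * (j : ℝ) ^ β) / 2) > r} : ℝ) /
          (η ^ (-(1 / β)) * Real.log (-Real.log r) ^ (1 / β)))
      (nhdsWithin 0 (Set.Ioi 0)) (nhds 1) := by
  set c : ℝ := ∑' n : ℤ, (1 + (n : ℝ) ^ 2) ^ (-(ν / 2)) with hc_def
  have hc1 : 1 ≤ c := by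
    have hsum := aux_summable hν
    have h0 : (1 + ((0:ℤ) : ℝ) ^ 2) ^ (-(ν / 2)) = 1 := by norm_num
    calc (1:ℝ) = (1 + ((0:ℤ) : ℝ) ^ 2) ^ (-(ν / 2)) := h0.symm
    _ ≤ c := Summable.le_tsum hsum 0 (fun n _ => Real.rpow_nonneg (by positivity) _)
  have hc0 : (0:ℝ) < c := lt_of_lt_of_le one_pos hc1
  -- decay of the sequence
  have hdecay : Tendsto (fun j : ℕ => c * Real.exp (-Real.exp (η * (j:ℝ)^β) / 2))
      atTop (nhds 0) := by
    have h1 : Tendsto (fun j : ℕ => η * (j:ℝ)^β) atTop atTop :=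
      (((tendsto_rpow_atTop hβ).const_mul_atTop hη).comp tendsto_natCast_atTop_atTop)
    have h2 : Tendsto (fun j : ℕ => -Real.exp (η * (j:ℝ)^β) / 2) atTop atBot := by
      apply Tendsto.atBot_div_const (by norm_num : (0:ℝ) < 2)
      exact tendsto_neg_atTop_atBot.comp (Real.tendsto_exp_atTop.comp h1)
    have h3 := Real.tendsto_exp_atBot.comp h2
    simpa using h3.const_mul c
  have hfin : ∀ r : ℝ, 0 < r →
      {j : ℕ | c * Real.exp (-Real.exp (η * (j:ℝ)^β) / 2) > r}.Finite := by
    intro r hr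
    have h := hdecay.eventually_lt_const hr
    rw [← Nat.cofinite_eq_atTop] at h
    have h2 : {j : ℕ | ¬ ¬ (c * Real.exp (-Real.exp (η * (j:ℝ)^β) / 2) > r)}.Finite :=
      Filter.eventually_cofinite.mp (h.mono fun j hj => not_lt.mpr hj.le)
    exact h2.subset fun j hj => not_not.mpr hj
  refine ⟨?_, ?_⟩
  · filter_upwards [self_mem_nhdsWithin] with r hr
    exact hfin r hr
  -- set identity eventually
  have hcomp : Tendsto (fun r : ℝ => -Real.log r) (nhdsWithin 0 (Set.Ioi 0)) atTop :=
    tendsto_neg_atBot_atTop.comp Real.tendsto_log_nhdsGT_zero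
  have hmain := (aux_tendsto (a := Real.log c) (Real.log_nonneg hc1) hη hβ).comp hcomp
  refine hmain.congr' ?_
  have hr0 : (0:ℝ) < Real.exp (Real.log c - 1/2) := Real.exp_pos _
  filter_upwards [Ioo_mem_nhdsGT_of_mem (Set.left_mem_Ico.mpr hr0)] with r hr
  obtain ⟨hr1, hr2⟩ := hr
  have hL : 1 < 2 * (Real.log c + -Real.log r) := by
    have := (Real.log_lt_iff_lt_exp hr1).mpr hr2
    linarith
  set L : ℝ := Real.log c + -Real.log r with hLdef
  have hLpos : (0:ℝ) < 2 * L := by linarith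
  have hM : 0 < Real.log (2 * L) / η := div_pos (Real.log_pos hL) hη
  set M : ℝ := Real.log (2 * L) / η with hMdef
  -- identify the set
  have hset : {j : ℕ | c * Real.exp (-Real.exp (η * (j:ℝ)^β) / 2) > r}
      = {j : ℕ | j < ⌈M ^ (1/β)⌉₊} := by
    ext j
    simp only [Set.mem_setOf_eq, gt_iff_lt]
    rw [Nat.lt_ceil]
    have e1 : r < c * Real.exp (-Real.exp (η * (j:ℝ)^β) / 2)
        ↔ r / c < Real.exp (-Real.exp (η * (j:ℝ)^β) / 2) := by
      rw [div_lt_iff₀ hc0, mul_comm]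
    have e2 : r / c < Real.exp (-Real.exp (η * (j:ℝ)^β) / 2)
        ↔ Real.log (r / c) < -Real.exp (η * (j:ℝ)^β) / 2 :=
      (Real.log_lt_iff_lt_exp (by positivity)).symm
    have e3 : Real.log (r / c) < -Real.exp (η * (j:ℝ)^β) / 2
        ↔ Real.exp (η * (j:ℝ)^β) < 2 * L := by
      rw [Real.log_div hr1.ne' hc0.ne']
      constructor <;> intro h <;> simp only [hLdef] at * <;> linarith
    have e4 : Real.exp (η * (j:ℝ)^β) < 2 * L ↔ η * (j:ℝ)^β < Real.log (2 * L) :=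
      (Real.lt_log_iff_exp_lt hLpos).symm
    have e5 : η * (j:ℝ)^β < Real.log (2 * L) ↔ (j:ℝ)^β < M := (lt_div_iff₀' hη).symm
    have e6 : (j:ℝ)^β < M ↔ (j:ℝ) < M ^ (1/β) := by
      rw [one_div]
      conv_lhs => rw [← Real.rpow_inv_rpow hM.le hβ.ne']
      exact Real.rpow_lt_rpow_iff (j.cast_nonneg) (Real.rpow_nonneg hM.le _) hβ
    rw [e1, e2, e3, e4, e5, e6]
  show _ = _
  rw [hset]
  have hcard : Nat.card {j : ℕ | j < ⌈M ^ (1/β)⌉₊} = ⌈M ^ (1/β)⌉₊ := by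
    have : {j : ℕ | j < ⌈M ^ (1/β)⌉₊} = ↑(Finset.range ⌈M ^ (1/β)⌉₊) := by
      ext j; simp
    rw [this, Nat.card_coe_set_eq, Set.ncard_coe_finset, Finset.card_range]
  rw [hcard]
  rfl
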